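/- Two Lie algebra automorphisms σ, τ of D_n = Der_K(P_n) are equal if and only if σ(∂_i) = τ(∂_i) and σ(x_i∂_i) = τ(x_i∂_i) for all i = 1, ..., n. -/

import Mathlib

set_option maxHeartbeats 1000000

open MvPolynomial

set_option linter.unusedSectionVars false

namespace LieAutRigidity

variable {n : ℕ} {K : Type*} [Field K] [CharZero K]

local notation "Pn" => MvPolynomial (Fin n) K
local notation "Dn" => Derivation K (MvPolynomial (Fin n) K) (MvPolynomial (Fin n) K)

lemma bracket_smul (f g : MvPolynomial (Fin n) K) (i j : Fin n) :
    ⁅(f • pderiv i : Dn), (g • pderiv j : Dn)⁆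
      = (f * pderiv i g) • pderiv j - (g * pderiv j f) • pderiv i := by
  classical
  apply derivation_ext
  intro k
  by_cases hik : i = k <;> by_cases hjk : j = k <;>
    simp [Derivation.commutator_apply, Derivation.smul_apply, pderiv_mul, hik, hjk,
      Pi.single_eq_of_ne, mul_comm, mul_left_comm]

lemma brE (m : Fin n →₀ ℕ) (i j : Fin n) :
    ⁅(pderiv i : Dn), ((monomial m 1 : Pn) • pderiv j : Dn)⁆
      = (m i : K) • ((monomial (m - Finsupp.single i 1) 1 : Pn) • pderiv j : Dn) := by
  have h := bracket_smul (1 : Pn) (monomial m 1) i j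
  rw [one_smul] at h
  rw [h]
  simp only [one_mul, pderiv_monomial, Derivation.map_one_eq_zero, mul_zero, zero_smul, sub_zero]
  rw [← smul_assoc]
  congr 1
  simp [smul_monomial]

lemma X_mul_pderiv_monomial (m : Fin n →₀ ℕ) (i : Fin n) :
    (X i : Pn) * pderiv i (monomial m 1) = monomial m (m i : K) := by
  classical
  rcases Nat.eq_zero_or_pos (m i) with h0 | hpos
  · simp [pderiv_monomial, h0]
  · rw [pderiv_monomial, one_mul, X, monomial_mul, one_mul]
    have hle : Finsupp.single i 1 ≤ m := by
      rw [Finsupp.single_le_iff]; exact hpos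
    have hadd : Finsupp.single i 1 + (m - Finsupp.single i 1) = m := by
      rw [add_comm]; exact tsub_add_cancel_of_le hle
    rw [hadd]

lemma brH (m : Fin n →₀ ℕ) (i j : Fin n) :
    ⁅((X i : Pn) • pderiv i : Dn), ((monomial m 1 : Pn) • pderiv j : Dn)⁆
      = ((m i : K) - if i = j then 1 else 0) • ((monomial m 1 : Pn) • pderiv j : Dn) := by
  classical
  rw [bracket_smul, X_mul_pderiv_monomial]
  have h1 : (monomial m ((m i : K)) : Pn) = (m i : K) • (monomial m 1 : Pn) := by
    simp [smul_monomial]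
  by_cases hij : i = j
  · subst hij
    rw [if_pos rfl, h1, smul_assoc, pderiv_X_self, mul_one]
    module
  · rw [if_neg hij, sub_zero, pderiv_X_of_ne hij, mul_zero, zero_smul, sub_zero, h1,
      smul_assoc]

lemma sum_sub_single (m : Fin n →₀ ℕ) (i : Fin n) (h : 0 < m i) :
    (∑ k, ((m - Finsupp.single i 1 : Fin n →₀ ℕ)) k) + 1 = ∑ k, m k := by
  classical
  rw [← Finset.sum_erase_add Finset.univ _ (Finset.mem_univ i),
      ← Finset.sum_erase_add Finset.univ (fun k => m k) (Finset.mem_univ i)]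
  have h1 : ∑ k ∈ Finset.univ.erase i, ((m - Finsupp.single i 1 : Fin n →₀ ℕ)) k
      = ∑ k ∈ Finset.univ.erase i, m k := by
    refine Finset.sum_congr rfl fun k hk => ?_
    have hki : k ≠ i := (Finset.mem_erase.mp hk).1
    rw [Finsupp.tsub_apply, Finsupp.single_apply, if_neg (fun hh => hki hh.symm)]
    simp
  rw [h1, Finsupp.tsub_apply, Finsupp.single_apply, if_pos rfl]
  omega

lemma sum_deriv_apply {ι : Type*} (s : Finset ι) (D : ι → Dn) (a : Pn) :
    (∑ j ∈ s, D j) a = ∑ j ∈ s, D j a := by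
  induction s using Finset.cons_induction with
  | empty => simp
  | cons i s hi ih => simp [Finset.sum_cons, ih]

lemma lieEquiv_map_smul (ρ : Dn ≃ₗ⁅K⁆ Dn) (a : K) (x : Dn) : ρ (a • x) = a • ρ x :=
  ρ.toLinearEquiv.map_smul a x

lemma lieEquiv_map_add (ρ : Dn ≃ₗ⁅K⁆ Dn) (x y : Dn) : ρ (x + y) = ρ x + ρ y :=
  ρ.toLinearEquiv.map_add x y

lemma lieEquiv_map_sum {ι : Type*} (ρ : Dn ≃ₗ⁅K⁆ Dn) (s : Finset ι) (f : ι → Dn) :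
    ρ (∑ j ∈ s, f j) = ∑ j ∈ s, ρ (f j) :=
  map_sum ρ.toLinearEquiv f s

lemma fixes_monomial (ρ : Dn ≃ₗ⁅K⁆ Dn)
    (hE : ∀ i, ρ (pderiv i) = pderiv i)
    (hH : ∀ i, ρ ((X i : Pn) • pderiv i) = (X i : Pn) • pderiv i) :
    ∀ (d : ℕ) (m : Fin n →₀ ℕ), (∑ i, m i) = d → ∀ j,
      ρ ((monomial m 1 : Pn) • pderiv j) = (monomial m 1 : Pn) • pderiv j := by
  classical
  intro d
  induction d using Nat.strong_induction_on with
  | _ d IH =>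
  intro m hm j
  rcases Nat.eq_zero_or_pos d with rfl | hd
  · have hm0 : m = 0 := by
      ext i
      exact (Finset.sum_eq_zero_iff.mp hm) i (Finset.mem_univ i)
    subst hm0
    have : (monomial (0 : Fin n →₀ ℕ) (1 : K) : Pn) = 1 := by simp
    rw [this, one_smul]
    exact hE j
  · set M : Dn := (monomial m 1 : Pn) • pderiv j with hMdef
    set a : Fin n → K := fun i => (m i : K) - if i = j then 1 else 0 with hadef
    have hbE : ∀ i, ⁅(pderiv i : Dn), ρ M⁆ = ⁅(pderiv i : Dn), M⁆ := by
      intro i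
      conv_lhs => rw [← hE i]
      rw [← ρ.map_lie, hMdef, brE, lieEquiv_map_smul]
      rcases Nat.eq_zero_or_pos (m i) with h0 | hpos
      · simp [h0]
      · congr 1
        have hlt : (∑ k, ((m - Finsupp.single i 1 : Fin n →₀ ℕ)) k) < d := by
          have := sum_sub_single m i hpos
          omega
        exact IH _ hlt _ rfl j
    have hMH : ∀ i, ⁅((X i : Pn) • pderiv i : Dn), M⁆ = a i • M := by
      intro i
      rw [hMdef, hadef]
      exact brH m i j
    have hbH : ∀ i, ⁅((X i : Pn) • pderiv i : Dn), ρ M⁆ = a i • ρ M := by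
      intro i
      conv_lhs => rw [← hH i]
      rw [← ρ.map_lie, hMH i, lieEquiv_map_smul]
    have hc1 : ∀ i k, pderiv i ((ρ M) (X k)) = pderiv i (M (X k)) := by
      intro i k
      have h := DFunLike.congr_fun (hbE i) (X k)
      simp only [Derivation.commutator_apply] at h
      by_cases hik : i = k
      · subst hik
        simpa using h
      · have hki : pderiv i (X k : Pn) = 0 :=
          pderiv_X_of_ne (fun hh => hik hh.symm)
        rw [hki, map_zero, map_zero, sub_zero, sub_zero] at h
        exact h
    have hc2 : ∀ i k, C (a i) * ((ρ M) (X k) - M (X k))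
        = -(if i = k then (ρ M) (X k) - M (X k) else 0) := by
      intro i k
      have h1 := DFunLike.congr_fun (hbH i) (X k)
      have h2 := DFunLike.congr_fun (hMH i) (X k)
      simp only [Derivation.commutator_apply, Derivation.smul_apply, smul_eq_mul,
        smul_eq_C_mul] at h1 h2
      have h3 := hc1 i k
      by_cases hik : i = k
      · subst hik
        rw [if_pos rfl]
        rw [pderiv_X_self, mul_one] at h1 h2
        linear_combination h2 - h1 + X i * h3
      · rw [if_neg hik]
        have hki : pderiv i (X k : Pn) = 0 :=
          pderiv_X_of_ne (fun hh => hik hh.symm)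
        rw [hki, mul_zero, map_zero, sub_zero] at h1 h2
        linear_combination h2 - h1 + X i * h3
    have hc0 : ∀ k, (ρ M) (X k) = M (X k) := by
      intro k
      by_contra hck
      have hck' : (ρ M) (X k) - M (X k) ≠ 0 := sub_ne_zero.mpr hck
      have e1 := hc2 k k
      rw [if_pos rfl] at e1
      have e2 : (C (a k) + 1) * ((ρ M) (X k) - M (X k)) = 0 := by
        linear_combination e1
      have e3 : a k + 1 = 0 := by
        rcases mul_eq_zero.mp e2 with h | h
        · have : (C (a k + 1) : Pn) = 0 := by rw [map_add, map_one, h]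
          exact (MvPolynomial.C_eq_zero).mp this
        · exact absurd h hck'
      have hkj : k = j := by
        by_contra hkj
        rw [hadef] at e3
        simp only [if_neg hkj, sub_zero] at e3
        have : ((m k + 1 : ℕ) : K) = 0 := by push_cast; linear_combination e3
        exact Nat.succ_ne_zero _ (Nat.cast_eq_zero.mp this)
      subst hkj
      rw [hadef] at e3
      have hmk0 : m k = 0 := by simpa using e3
      have hmi0 : ∀ i, m i = 0 := by
        intro i
        by_cases hik : i = k
        · rw [hik]; exact hmk0
        · have e4 := hc2 i k
          rw [if_neg hik, neg_zero] at e4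
          rcases mul_eq_zero.mp e4 with h | h
          · have hai : a i = 0 := (MvPolynomial.C_eq_zero).mp h
            rw [hadef] at hai
            simp only [if_neg hik, sub_zero] at hai
            exact Nat.cast_eq_zero.mp hai
          · exact absurd h hck'
      have : d = 0 := by
        rw [← hm]
        exact Finset.sum_eq_zero fun i _ => hmi0 i
      omega
    exact derivation_ext hc0

lemma fixes_all (ρ : Dn ≃ₗ⁅K⁆ Dn)
    (hE : ∀ i, ρ (pderiv i) = pderiv i)
    (hH : ∀ i, ρ ((X i : Pn) • pderiv i) = (X i : Pn) • pderiv i)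
    (δ : Dn) : ρ δ = δ := by
  classical
  have hsmul : ∀ (f : Pn) (j : Fin n), ρ (f • pderiv j) = f • pderiv j := by
    intro f j
    induction f using MvPolynomial.induction_on' with
    | monomial u a =>
      have h : (monomial u a : Pn) = a • (monomial u 1 : Pn) := by
        rw [smul_monomial, smul_eq_mul, mul_one]
      rw [h, smul_assoc, lieEquiv_map_smul]
      rw [fixes_monomial ρ hE hH (∑ i, u i) u rfl j]
    | add p q hp hq =>
      rw [add_smul, lieEquiv_map_add, hp, hq]
  have hdec : δ = ∑ j, (δ (X j)) • pderiv j := by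
    apply derivation_ext
    intro k
    rw [sum_deriv_apply]
    classical
    rw [Finset.sum_eq_single k]
    · simp
    · intro b _ hbk
      simp [Derivation.smul_apply, Pi.single_eq_of_ne (Ne.symm hbk)]
    · intro h; exact absurd (Finset.mem_univ k) h
  conv_lhs => rw [hdec]
  rw [lieEquiv_map_sum]
  conv_rhs => rw [hdec]
  exact Finset.sum_congr rfl fun j _ => hsmul _ j

end LieAutRigidity

/-- Two Lie algebra automorphisms of D_n = Der_K(P_n) are equal iff they agree on
∂_1,...,∂_n and on H_1 = x_1∂_1,...,H_n = x_n∂_n. -/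
theorem lie_automorphisms_eq_iff (n : ℕ) (K : Type*) [Field K] [CharZero K]
    (σ τ : Derivation K (MvPolynomial (Fin n) K) (MvPolynomial (Fin n) K) ≃ₗ⁅K⁆
           Derivation K (MvPolynomial (Fin n) K) (MvPolynomial (Fin n) K)) :
    σ = τ ↔ (∀ i : Fin n, σ (pderiv i) = τ (pderiv i)) ∧
      (∀ i : Fin n, σ ((X i : MvPolynomial (Fin n) K) • pderiv i) =
        τ ((X i : MvPolynomial (Fin n) K) • pderiv i)) := by
  constructor
  · rintro rfl
    exact ⟨fun _ => rfl, fun _ => rfl⟩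
  · rintro ⟨hE, hH⟩
    set ρ := σ.trans τ.symm with hρ
    have hEρ : ∀ i, ρ (pderiv i) = pderiv i := by
      intro i
      show τ.symm (σ (pderiv i)) = pderiv i
      rw [hE i, τ.symm_apply_apply]
    have hHρ : ∀ i, ρ ((X i : MvPolynomial (Fin n) K) • pderiv i)
        = (X i : MvPolynomial (Fin n) K) • pderiv i := by
      intro i
      show τ.symm (σ _) = _
      rw [hH i, τ.symm_apply_apply]
    apply LieEquiv.ext
    intro δ
    have := LieAutRigidity.fixes_all ρ hEρ hHρ δ
    have h2 : τ.symm (σ δ) = δ := this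
    calc σ δ = τ (τ.symm (σ δ)) := (τ.apply_symm_apply _).symm
      _ = τ δ := by rw [h2]
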